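/- Let q be an odd integer, m < q, f = e^{iπ/m}, and t_{j'} = f·ω_m^{j'} for j' ∈ {0,...,m−1}. Then for every integer ℓ, the distance from t_{j'} to the q-th root of unity ω_q^ℓ is at least 2/q²; that is, min over all q-th roots of unity α of |t_{j'} − α| ≥ 2/q². -/

import Mathlib

lemma abs_exp_sub_exp (a b : ℝ) :
    ‖Complex.exp (a * Complex.I) - Complex.exp (b * Complex.I)‖ =
      2 * |Real.sin ((a - b) / 2)| := by
  set u : ℝ := (a + b) / 2
  set v : ℝ := (a - b) / 2
  have h1 : (a : ℂ) * Complex.I = (u : ℝ) * Complex.I + (v : ℝ) * Complex.I := by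
    push_cast [u, v]; ring
  have h2 : (b : ℂ) * Complex.I = (u : ℝ) * Complex.I + (-v : ℝ) * Complex.I := by
    push_cast [u, v]; ring
  have key : Complex.exp (a * Complex.I) - Complex.exp (b * Complex.I) =
      Complex.exp ((u : ℝ) * Complex.I) * (2 * Complex.I * Complex.sin (v : ℝ)) := by
    rw [h1, h2, Complex.exp_add, Complex.exp_add, ← mul_sub]
    congr 1
    rw [Complex.sin]
    push_cast
    linear_combination (Complex.exp ((v:ℂ) * Complex.I) - Complex.exp (-(v:ℂ) * Complex.I)) * Complex.I_sq
  rw [key, norm_mul, Complex.norm_exp_ofReal_mul_I, one_mul, norm_mul, ← Complex.ofReal_sin,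
    Complex.norm_real]
  simp

theorem stmt9 (q m : ℕ) (hq : Odd q) (hm : 0 < m) (hmq : m < q)
    (j' : ℕ) (hj' : j' < m) (l : ℤ) :
    (2 : ℝ) / (q : ℝ) ^ 2 ≤
      ‖Complex.exp (Real.pi * Complex.I * (2 * (j' : ℂ) + 1) / m) -
        Complex.exp (2 * Real.pi * Complex.I / q) ^ l‖ := by
  have hq0 : 0 < q := hm.trans hmq
  have hqR : (0:ℝ) < q := by exact_mod_cast hq0
  have hmR : (0:ℝ) < m := by exact_mod_cast hm
  have hpi := Real.pi_pos
  set a : ℝ := Real.pi * (2*j'+1)/m with ha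
  set b : ℝ := 2*Real.pi*l/q with hb
  have e1 : Real.pi * Complex.I * (2 * (j' : ℂ) + 1) / m = (a : ℝ) * Complex.I := by
    push_cast [ha]; ring
  have e2 : Complex.exp (2 * Real.pi * Complex.I / q) ^ l = Complex.exp ((b : ℝ) * Complex.I) := by
    rw [← Complex.exp_int_mul]; congr 1; push_cast [hb]; ring
  rw [e1, e2, abs_exp_sub_exp]
  set k : ℤ := (2*(j':ℤ)+1)*q - 2*l*m with hk
  set n : ℤ := round ((k:ℝ)/(2*m*q)) with hn
  set r : ℤ := k - 2*m*q*n with hrdef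
  have hrodd : Odd r := by
    rcases hq with ⟨c, hc⟩
    refine ⟨(2*j'+1)*c + j' - l*m - m*q*n, ?_⟩
    push_cast [hrdef, hk, hc]; ring
  have hrne : r ≠ 0 := by
    rintro h
    rcases hrodd with ⟨c, hc⟩
    omega
  have hr1 : (1:ℝ) ≤ |(r:ℝ)| := by exact_mod_cast Int.one_le_abs hrne
  set y : ℝ := Real.pi * r / (2*m*q) with hy
  have hxval : (a - b)/2 = y + n*Real.pi := by
    rw [ha, hb, hy]; push_cast [hrdef, hk]; field_simp; ring
  rw [hxval, Real.sin_add_int_mul_pi, abs_mul]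
  have habs1 : |((-1:ℝ))^n| = 1 := by
    rcases Int.even_or_odd n with h | h
    · rw [h.neg_one_zpow]; simp
    · rw [h.neg_one_zpow]; simp
  rw [habs1, one_mul]
  have hround : |(k:ℝ)/(2*m*q) - n| ≤ 1/2 := by rw [hn]; exact abs_sub_round _
  have hrle : |(r:ℝ)| ≤ m*q := by
    have h0 : (r:ℝ) = 2*m*q * ((k:ℝ)/(2*m*q) - n) := by
      push_cast [hrdef]; field_simp
    have h2 : |(r:ℝ)| = 2*m*q * |(k:ℝ)/(2*m*q) - n| := by
      rw [h0, abs_mul, abs_of_pos (show (0:ℝ) < 2*m*q by positivity)]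
    rw [h2]
    have := mul_le_mul_of_nonneg_left hround (show (0:ℝ) ≤ 2*m*q by positivity)
    nlinarith
  have hy_abs : |y| = Real.pi * |(r:ℝ)| / (2*m*q) := by
    rw [hy, abs_div, abs_mul, abs_of_pos hpi, abs_of_pos (show (0:ℝ) < 2*m*q by positivity)]
  have hy_le : |y| ≤ Real.pi/2 := by
    rw [hy_abs, div_le_div_iff₀ (by positivity) two_pos]
    nlinarith
  have hsin := Real.mul_abs_le_abs_sin hy_le
  have hval : 2/Real.pi * |y| = |(r:ℝ)|/(m*q) := by
    rw [hy_abs]; field_simp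
  rw [hval] at hsin
  have h1 : (1:ℝ)/(m*q) ≤ |(r:ℝ)|/(m*q) := by gcongr
  have hmqle : (m:ℝ) ≤ q := by exact_mod_cast hmq.le
  have key2 : (2:ℝ)/(q:ℝ)^2 ≤ 2/(m*q) := by
    apply div_le_div_of_nonneg_left (by norm_num) (by positivity)
    nlinarith
  have : (2:ℝ)/(m*q) = 2*((1:ℝ)/(m*q)) := by ring
  linarith
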